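/- arXiv:1708.04639 — 2 statements merged into one kernel-verified Lean document; each statement's English description precedes it below -/
import Mathlib

section
/- Given r ∈ [1, ∞), n ∈ ℤ, and a continuous function 𝔞 : [2^n, 2^{n+1}] → ℂ, one has V_r(𝔞_t : t ∈ [2^n, 2^{n+1})) ≤ 2^{1−1/r} Σ_{l≥0} ( Σ_{k=0}^{2^l − 1} |𝔞_{2^n + 2^{n−l}(k+1)} − 𝔞_{2^n + 2^{n−l}k}|^r )^{1/r}. -/
open MeasureTheory ENNReal Set
open scoped Pointwise NNReal

noncomputable section

/-- The `r`-variation seminorm of `t ↦ a t` over the index set `Z`: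
the supremum over all finite increasing sequences `t_0 < … < t_J` in `Z` of
`(∑_{j<J} ‖a t_{j+1} - a t_j‖^r)^{1/r}`. -/
def Vr {E : Type*} [SeminormedAddGroup E] (r : ℝ) (a : ℝ → E) (Z : Set ℝ) : ℝ≥0∞ :=
  ⨆ (J : ℕ) (t : Fin (J + 1) → ℝ) (_ : StrictMono t) (_ : ∀ j, t j ∈ Z),
    (∑ j : Fin J, ((‖a (t j.succ) - a (t j.castSucc)‖₊ : ℝ≥0∞)) ^ r) ^ (1 / r)

/-- The `L^p` norm of an `ℝ≥0∞`-valued function. -/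
def lpNormENN {α : Type*} [MeasurableSpace α] (p : ℝ) (g : α → ℝ≥0∞) (μ : Measure α) : ℝ≥0∞ :=
  (∫⁻ x, g x ^ p ∂μ) ^ (1 / p)

/-- The Hardy–Littlewood averaging operator `M_t^G f(x) = |G_t|⁻¹ ∫_{G_t} f(x-y) dy`,
where `G_t = t • G`. -/
def avg {d : ℕ} (G : Set (EuclideanSpace ℝ (Fin d))) (t : ℝ)
    (f : EuclideanSpace ℝ (Fin d) → ℝ) (x : EuclideanSpace ℝ (Fin d)) : ℝ :=
  ((volume (t • G)).toReal)⁻¹ * ∫ y in t • G, f (x - y)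

/-- A symmetric convex body: a bounded, open, convex, nonempty set symmetric about the origin. -/
def IsSymmetricConvexBody {d : ℕ} (G : Set (EuclideanSpace ℝ (Fin d))) : Prop :=
  Convex ℝ G ∧ IsOpen G ∧ Bornology.IsBounded G ∧ G.Nonempty ∧ ∀ x ∈ G, -x ∈ G


section ShortVarAux

open Filter
open scoped ENNReal NNReal
noncomputable section
namespace SVaux

/-- Grid spacing at scale `l`. -/
def gh (n : ℤ) (l : ℕ) : ℝ := (2:ℝ) ^ (n - (l:ℤ))

/-- Grid point. -/
def gpt (n : ℤ) (l : ℕ) (k : ℤ) : ℝ := (2:ℝ) ^ n + gh n l * (k:ℝ)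

/-- Floor index. -/
def gfl (n : ℤ) (l : ℕ) (s : ℝ) : ℤ := ⌊(s - (2:ℝ) ^ n) / gh n l⌋

def gu (n : ℤ) (l : ℕ) (s : ℝ) : ℝ := gpt n l (gfl n l s)
def gp (n : ℤ) (l : ℕ) (s : ℝ) : ℝ := gpt n l (gfl n l s + 1)

variable (n : ℤ)

lemma gh_pos (l : ℕ) : 0 < gh n l := by
  have : (0:ℝ) < 2 := two_pos
  exact zpow_pos this _

lemma gh_succ (l : ℕ) : gh n l = 2 * gh n (l+1) := by
  unfold gh
  rw [← zpow_one_add₀ (two_ne_zero)]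
  congr 1
  push_cast
  ring

lemma gpt_lt_gpt {l : ℕ} {k k' : ℤ} : gpt n l k < gpt n l k' ↔ k < k' := by
  unfold gpt
  rw [add_lt_add_iff_left, mul_lt_mul_iff_right₀ (gh_pos n l), Int.cast_lt]

lemma gpt_le_gpt {l : ℕ} {k k' : ℤ} : gpt n l k ≤ gpt n l k' ↔ k ≤ k' := by
  unfold gpt
  rw [add_le_add_iff_left, mul_le_mul_iff_right₀ (gh_pos n l), Int.cast_le]

lemma gpt_double (l : ℕ) (k : ℤ) : gpt n (l+1) (2*k) = gpt n l k := by
  unfold gpt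
  rw [gh_succ n l]
  push_cast
  ring

lemma self_eq (l : ℕ) (s : ℝ) : (2:ℝ)^n + gh n l * ((s - (2:ℝ)^n)/gh n l) = s := by
  rw [mul_div_cancel₀ _ (gh_pos n l).ne']
  ring

lemma gu_le (l : ℕ) (s : ℝ) : gu n l s ≤ s := by
  have h1 : (gfl n l s : ℝ) ≤ (s - (2:ℝ)^n)/gh n l := Int.floor_le _
  have h2 := mul_le_mul_of_nonneg_left h1 (gh_pos n l).le
  unfold gu gpt
  nlinarith [self_eq n l s]

lemma lt_gp (l : ℕ) (s : ℝ) : s < gp n l s := by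
  have h1 : (s - (2:ℝ)^n)/gh n l < gfl n l s + 1 := Int.lt_floor_add_one _
  have h2 := mul_lt_mul_of_pos_left h1 (gh_pos n l)
  unfold gp gpt
  push_cast
  nlinarith [self_eq n l s]

lemma gp_eq (l : ℕ) (s : ℝ) : gp n l s = gu n l s + gh n l := by
  unfold gp gu gpt
  push_cast
  ring

lemma gfl_nonneg {s : ℝ} (hs : (2:ℝ)^n ≤ s) (l : ℕ) : 0 ≤ gfl n l s :=
  Int.floor_nonneg.2 (div_nonneg (by linarith) (gh_pos n l).le)

lemma two_zpow_succ : (2:ℝ)^(n+1) = 2 * (2:ℝ)^n := by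
  rw [zpow_add_one₀ (two_ne_zero)]; ring

lemma gpt_top (l : ℕ) : gpt n l ((2:ℤ)^l) = (2:ℝ)^(n+1) := by
  unfold gpt gh
  rw [two_zpow_succ]
  push_cast
  rw [← zpow_natCast (2:ℝ) l, ← zpow_add₀ (two_ne_zero : (2:ℝ) ≠ 0)]
  ring_nf

lemma gfl_lt {s : ℝ} (hs : s < (2:ℝ)^(n+1)) (l : ℕ) : gfl n l s < 2^l := by
  unfold gfl
  rw [Int.floor_lt, div_lt_iff₀ (gh_pos n l)]
  have h := gpt_top n l
  unfold gpt at h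
  push_cast at h ⊢
  nlinarith [gh_pos n l]

lemma gfl_succ (l : ℕ) (s : ℝ) :
    gfl n (l+1) s = 2 * gfl n l s ∨ gfl n (l+1) s = 2 * gfl n l s + 1 := by
  set y := (s - (2:ℝ)^n)/gh n (l+1) with hy
  have hgh := gh_pos n (l+1)
  have hyy : (s - (2:ℝ)^n)/gh n l = y / 2 := by
    rw [gh_succ n l, hy]
    rw [div_div]
    ring_nf
  have h1 : (gfl n l s : ℝ) ≤ y/2 := by
    rw [← hyy]; exact Int.floor_le _
  have h2 : y/2 < gfl n l s + 1 := by
    rw [← hyy]; exact Int.lt_floor_add_one _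
  have l1 : 2 * gfl n l s ≤ gfl n (l+1) s := by
    apply Int.le_floor.2
    push_cast
    linarith
  have l2 : gfl n (l+1) s < 2 * gfl n l s + 2 := by
    apply Int.floor_lt.2
    push_cast
    linarith
  omega

lemma gu_mono_succ (l : ℕ) (s : ℝ) : gu n l s ≤ gu n (l+1) s := by
  rcases gfl_succ n l s with h | h
  · unfold gu
    rw [h, gpt_double]
  · unfold gu
    rw [h]
    calc gpt n l (gfl n l s) = gpt n (l+1) (2 * gfl n l s) := (gpt_double n l _).symm
      _ ≤ gpt n (l+1) (2 * gfl n l s + 1) := (gpt_le_gpt n).2 (by omega)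

lemma gu_mono_scale {l l' : ℕ} (h : l ≤ l') (s : ℝ) : gu n l s ≤ gu n l' s := by
  induction l', h using Nat.le_induction with
  | base => exact le_refl _
  | succ m hm ih => exact ih.trans (gu_mono_succ n m s)


lemma gu_mem {s : ℝ} (hs : s ∈ Set.Ico ((2:ℝ)^n) ((2:ℝ)^(n+1))) (l : ℕ) :
    gu n l s ∈ Set.Icc ((2:ℝ)^n) ((2:ℝ)^(n+1)) := by
  constructor
  · have h0 : gpt n l 0 ≤ gpt n l (gfl n l s) := (gpt_le_gpt n).2 (gfl_nonneg n hs.1 l)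
    unfold gpt at h0
    simp only [Int.cast_zero, mul_zero, add_zero] at h0
    exact h0
  · exact (gu_le n l s).trans (le_of_lt hs.2)

lemma gp_mem {s : ℝ} (hs : s ∈ Set.Ico ((2:ℝ)^n) ((2:ℝ)^(n+1))) (l : ℕ) :
    gp n l s ∈ Set.Icc ((2:ℝ)^n) ((2:ℝ)^(n+1)) := by
  constructor
  · exact hs.1.trans (le_of_lt (lt_gp n l s))
  · have h1 : gfl n l s + 1 ≤ (2:ℤ)^l := by
      have := gfl_lt n hs.2 l
      omega
    have h0 : gpt n l (gfl n l s + 1) ≤ gpt n l ((2:ℤ)^l) := (gpt_le_gpt n).2 h1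
    rw [gpt_top] at h0
    exact h0

lemma tendsto_gh : Tendsto (gh n) atTop (nhds 0) := by
  have he : ∀ l : ℕ, gh n l = (2:ℝ)^n * (1/2:ℝ)^l := by
    intro l
    unfold gh
    rw [zpow_sub₀ (two_ne_zero : (2:ℝ) ≠ 0), zpow_natCast]
    rw [div_pow]
    simp [div_eq_mul_inv]
  have heq : gh n = fun l : ℕ => (2:ℝ)^n * (1/2:ℝ)^l := funext he
  rw [heq]
  have := tendsto_pow_atTop_nhds_zero_of_lt_one (by norm_num : (0:ℝ) ≤ 1/2) (by norm_num : (1/2:ℝ) < 1)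
  simpa using this.const_mul ((2:ℝ)^n)

lemma tendsto_gu (s : ℝ) : Tendsto (fun l => gu n l s) atTop (nhds s) := by
  have hlow : ∀ l, s - gh n l ≤ gu n l s := by
    intro l
    have := lt_gp n l s
    rw [gp_eq] at this
    linarith
  have hub : ∀ l, gu n l s ≤ s := fun l => gu_le n l s
  have h1 : Tendsto (fun l : ℕ => s - gh n l) atTop (nhds s) := by
    simpa using (tendsto_const_nhds (x := s)).sub (tendsto_gh n)
  exact tendsto_of_tendsto_of_tendsto_of_le_of_le h1 tendsto_const_nhds hlow hub

lemma tendsto_gp (s : ℝ) : Tendsto (fun l => gp n l s) atTop (nhds s) := by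
  have hlow : ∀ l, s ≤ gp n l s := fun l => (lt_gp n l s).le
  have hub : ∀ l, gp n l s ≤ s + gh n l := by
    intro l
    rw [gp_eq]
    have := gu_le n l s
    linarith
  have h1 : Tendsto (fun l : ℕ => s + gh n l) atTop (nhds s) := by
    simpa using (tendsto_const_nhds (x := s)).add (tendsto_gh n)
  exact tendsto_of_tendsto_of_tendsto_of_le_of_le tendsto_const_nhds h1 hlow hub

/-- The key alignment lemma: at the minimal scale `L` for which the floor point of `T`
exceeds `t`, the strict successor point of `t` equals the floor point of `T`. -/
lemma pstart {t T : ℝ} (h1 : (2:ℝ)^n ≤ t) (h3 : T < (2:ℝ)^(n+1)) {L : ℕ}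
    (h4 : t < gu n L T) (h5 : ∀ l < L, gu n l T ≤ t) :
    gp n L t = gu n L T := by
  -- L ≥ 1
  have hL1 : 1 ≤ L := by
    by_contra hc
    push_neg at hc
    interval_cases L
    · -- gu n 0 T = 2^n ≤ t
      have hfl0 : gfl n 0 T ≤ 0 := by
        have := gfl_lt n h3 0
        omega
      have : gu n 0 T ≤ gpt n 0 0 := (gpt_le_gpt n).2 hfl0
      unfold gpt at this
      simp at this
      linarith
  set m := gfl n L t with hm
  set m' := gfl n L T with hm'
  have hmm : m < m' := by
    have hu : gpt n L m ≤ t := gu_le n L t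
    have : gpt n L m < gpt n L m' := lt_of_le_of_lt hu h4
    exact (gpt_lt_gpt n).1 this
  have hmm2 : m' < m + 2 := by
    by_contra hc
    push_neg at hc
    obtain ⟨l, rfl⟩ : ∃ l, L = l + 1 := ⟨L - 1, by omega⟩
    have hstep := gfl_succ n l T
    rw [← hm'] at hstep
    set m₁ := gfl n l T with hm₁
    have h2m : m + 1 ≤ 2 * m₁ := by omega
    have : gu n l T = gpt n (l+1) (2 * m₁) := by
      unfold gu
      rw [← hm₁, gpt_double]
    have hgt : t < gu n l T := by
      rw [this]
      calc t < gp n (l+1) t := lt_gp n (l+1) t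
        _ = gpt n (l+1) (m + 1) := rfl
        _ ≤ gpt n (l+1) (2 * m₁) := (gpt_le_gpt n).2 (by omega)
    exact absurd (h5 l (by omega)) (not_le.2 hgt)
  have : m' = m + 1 := by omega
  unfold gp gu
  rw [← hm, ← hm', this]


open ENNReal in
lemma combine_rpow {r : ℝ} (hr : 1 ≤ r) (x y : ℝ≥0∞) :
    x ^ (1/r) + y ^ (1/r) ≤ ENNReal.ofReal ((2:ℝ) ^ (1 - 1/r)) * (x + y) ^ (1/r) := by
  have hr0 : (0:ℝ) < r := lt_of_lt_of_le one_pos hr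
  have h2 := ENNReal.rpow_arith_mean_le_arith_mean2_rpow (1/2) (1/2)
    (x ^ (1/r)) (y ^ (1/r)) (by rw [← two_mul]; simp [ENNReal.mul_inv_cancel]; ) hr
  have hback : ∀ z : ℝ≥0∞, (z ^ (1/r)) ^ r = z := by
    intro z
    rw [← ENNReal.rpow_mul, one_div, inv_mul_cancel₀ hr0.ne', ENNReal.rpow_one]
  rw [hback, hback] at h2
  -- h2 : (1/2 * x^(1/r) + 1/2 * y^(1/r)) ^ r ≤ 1/2 * x + 1/2 * y
  have h3 := ENNReal.rpow_le_rpow h2 (by positivity : (0:ℝ) ≤ 1/r)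
  have hback2 : ∀ z : ℝ≥0∞, (z ^ r) ^ (1/r) = z := by
    intro z
    rw [← ENNReal.rpow_mul, one_div, mul_inv_cancel₀ hr0.ne', ENNReal.rpow_one]
  rw [hback2] at h3
  have h4 : ((1/2 : ℝ≥0∞) * x + (1/2) * y) = (1/2 : ℝ≥0∞) * (x + y) := by ring
  rw [h4] at h3
  have h5 : ((1/2 : ℝ≥0∞) * (x + y)) ^ (1/r) = (1/2 : ℝ≥0∞) ^ (1/r) * (x + y) ^ (1/r) :=
    ENNReal.mul_rpow_of_nonneg _ _ (by positivity)
  rw [h5] at h3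
  have h6 := mul_le_mul_right h3 (2:ℝ≥0∞)
  rw [mul_add] at h6
  have hhalf : ∀ z : ℝ≥0∞, (2:ℝ≥0∞) * ((1/2) * z) = z := by
    intro z
    rw [← mul_assoc, one_div, ENNReal.mul_inv_cancel (by norm_num) (by norm_num), one_mul]
  rw [hhalf, hhalf] at h6
  refine h6.trans (le_of_eq ?_)
  rw [← mul_assoc]
  congr 1
  -- 2 * (1/2)^(1/r) = ofReal (2^(1-1/r))
  rw [← ENNReal.ofReal_rpow_of_pos (by norm_num : (0:ℝ) < 2)]
  have h7 : ENNReal.ofReal (2:ℝ) = (2:ℝ≥0∞) := by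
    norm_num
  rw [h7, sub_eq_add_neg, ENNReal.rpow_add _ _ (by norm_num) (by norm_num),
    ENNReal.rpow_one, ENNReal.rpow_neg, one_div, ENNReal.inv_rpow]

lemma mink_finset {r : ℝ} (hr : 1 ≤ r) {J : ℕ} (L : ℕ) (g : ℕ → Fin J → ℝ≥0∞) :
    (∑ j : Fin J, (∑ l ∈ Finset.range L, g l j) ^ r) ^ (1/r) ≤
      ∑ l ∈ Finset.range L, (∑ j : Fin J, (g l j) ^ r) ^ (1/r) := by
  have hr0 : (0:ℝ) < r := lt_of_lt_of_le one_pos hr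
  induction L with
  | zero =>
      simp [ENNReal.zero_rpow_of_pos hr0, ENNReal.zero_rpow_of_pos (show (0:ℝ) < 1/r by positivity), hr0]
  | succ L ih =>
      rw [Finset.sum_range_succ]
      calc (∑ j : Fin J, (∑ l ∈ Finset.range (L+1), g l j) ^ r) ^ (1/r)
          = (∑ j : Fin J, ((∑ l ∈ Finset.range L, g l j) + g L j) ^ r) ^ (1/r) := by
            simp_rw [Finset.sum_range_succ]
        _ ≤ (∑ j : Fin J, (∑ l ∈ Finset.range L, g l j) ^ r) ^ (1/r)
            + (∑ j : Fin J, (g L j) ^ r) ^ (1/r) :=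
            ENNReal.Lp_add_le Finset.univ _ _ hr
        _ ≤ (∑ l ∈ Finset.range L, (∑ j : Fin J, (g l j) ^ r) ^ (1/r))
            + (∑ j : Fin J, (g L j) ^ r) ^ (1/r) := add_le_add ih le_rfl

lemma sum_range_two_mul {M : Type*} [AddCommMonoid M] (f : ℕ → M) (m : ℕ) :
    ∑ k ∈ Finset.range (2*m), f k = ∑ k ∈ Finset.range m, (f (2*k) + f (2*k+1)) := by
  induction m with
  | zero => simp
  | succ m ih =>
      have h2 : 2 * (m+1) = (2*m + 1) + 1 := by ring
      rw [h2, Finset.sum_range_succ, Finset.sum_range_succ, Finset.sum_range_succ, ih,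
        ← add_assoc]


def cterm (a : ℝ → ℂ) (r : ℝ) (n : ℤ) (l : ℕ) (k : ℕ) : ℝ≥0∞ :=
  ((‖a ((2:ℝ) ^ n + (2:ℝ) ^ (n - (l:ℤ)) * ((k:ℝ) + 1)) -
      a ((2:ℝ) ^ n + (2:ℝ) ^ (n - (l:ℤ)) * (k:ℝ))‖₊ : ℝ≥0∞)) ^ r

def Ssum (a : ℝ → ℂ) (r : ℝ) (n : ℤ) (l : ℕ) : ℝ≥0∞ :=
  (∑ k ∈ Finset.range (2 ^ l), cterm a r n l k) ^ (1 / r)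

lemma cterm_eq (a : ℝ → ℂ) (r : ℝ) (n : ℤ) (l : ℕ) (k : ℕ) :
    cterm a r n l k
      = ((‖a (gpt n l ((k:ℤ) + 1)) - a (gpt n l (k:ℤ))‖₊ : ℝ≥0∞)) ^ r := by
  unfold cterm gpt gh
  norm_num

end SVaux
end
end ShortVarAux

section ShortVarMain
open Filter SVaux

theorem short_variation_dyadic_domination' (r : ℝ) (hr : 1 ≤ r) (n : ℤ)
    (a : ℝ → ℂ) (ha : ContinuousOn a (Set.Icc ((2:ℝ) ^ n) ((2:ℝ) ^ (n + 1)))) :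
    Vr r a (Set.Ico ((2:ℝ) ^ n) ((2:ℝ) ^ (n + 1)))
      ≤ ENNReal.ofReal ((2:ℝ) ^ (1 - 1 / r)) * ∑' l : ℕ, SVaux.Ssum a r n l := by
  classical
  have hr0 : (0:ℝ) < r := lt_of_lt_of_le one_pos hr
  have h1r : (0:ℝ) < 1/r := by positivity
  set C : ℝ≥0∞ := ENNReal.ofReal ((2:ℝ) ^ (1 - 1/r)) with hCdef
  set B : ℝ≥0∞ := C * ∑' l : ℕ, SVaux.Ssum a r n l with hBdef
  show Vr r a _ ≤ B
  unfold Vr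
  refine iSup_le fun J => iSup_le fun t => iSup_le fun hst => iSup_le fun hmem => ?_
  -- abbreviations
  set tl : Fin J → ℝ := fun j => t j.castSucc with htl
  set tr : Fin J → ℝ := fun j => t j.succ with htr
  have htlr : ∀ j, tl j < tr j := fun j => hst Fin.castSucc_lt_succ
  have hmemL : ∀ j, tl j ∈ Set.Ico ((2:ℝ)^n) ((2:ℝ)^(n+1)) := fun j => hmem _
  have hmemR : ∀ j, tr j ∈ Set.Ico ((2:ℝ)^n) ((2:ℝ)^(n+1)) := fun j => hmem _
  -- minimal scale
  have hex : ∀ j : Fin J, ∃ l, tl j < gu n l (tr j) := by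
    intro j
    exact ((tendsto_gu n (tr j)).eventually (eventually_gt_nhds (htlr j))).exists
  set L0 : Fin J → ℕ := fun j => Nat.find (hex j) with hL0def
  have hL0spec : ∀ j, tl j < gu n (L0 j) (tr j) := fun j => Nat.find_spec (hex j)
  have hL0min : ∀ j, ∀ l < L0 j, gu n l (tr j) ≤ tl j :=
    fun j l hl => not_lt.1 (Nat.find_min (hex j) hl)
  have hL0mono : ∀ j l, L0 j ≤ l → tl j < gu n l (tr j) :=
    fun j l hl => lt_of_lt_of_le (hL0spec j) (gu_mono_scale n hl _)
  have hpst : ∀ j, gp n (L0 j) (tl j) = gu n (L0 j) (tr j) :=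
    fun j => pstart n (hmemL j).1 (hmemR j).2 (hL0spec j) (hL0min j)
  -- the two chains
  set Ec : Fin J → ℕ → ℂ := fun j l =>
    if L0 j ≤ l then a (gu n (l+1) (tr j)) - a (gu n l (tr j)) else 0 with hEcdef
  set Dc : Fin J → ℕ → ℂ := fun j l =>
    if L0 j ≤ l then a (gp n l (tl j)) - a (gp n (l+1) (tl j)) else 0 with hDcdef
  -- telescoping identity
  have hid : ∀ j : Fin J, ∀ L, L0 j ≤ L →
      a (tr j) - a (tl j) = (∑ l ∈ Finset.range L, (Ec j l + Dc j l))
        + (a (tr j) - a (gu n L (tr j))) + (a (gp n L (tl j)) - a (tl j)) := by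
    intro j L hL
    induction L, hL using Nat.le_induction with
    | base =>
        have hz : ∑ l ∈ Finset.range (L0 j), (Ec j l + Dc j l) = 0 := by
          refine Finset.sum_eq_zero fun l hl => ?_
          have hll : ¬ (L0 j ≤ l) := not_le.2 (Finset.mem_range.1 hl)
          simp [hEcdef, hDcdef, hll]
        rw [hz, hpst j]
        ring
    | succ L hL ih =>
        rw [Finset.sum_range_succ]
        have hE : Ec j L = a (gu n (L+1) (tr j)) - a (gu n L (tr j)) := if_pos hL
        have hD : Dc j L = a (gp n L (tl j)) - a (gp n (L+1) (tl j)) := if_pos hL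
        rw [hE, hD, ih]
        ring
  -- pieces
  set G : ℕ → Fin J → ℝ≥0∞ := fun l j => ((‖Ec j l‖₊ + ‖Dc j l‖₊ : ℝ≥0) : ℝ≥0∞) with hGdef
  set τ : Fin J → ℕ → ℝ≥0∞ := fun j L =>
    ((‖a (tr j) - a (gu n L (tr j))‖₊ + ‖a (gp n L (tl j)) - a (tl j)‖₊ : ℝ≥0) : ℝ≥0∞) with hτdef
  have hnorm : ∀ (j : Fin J) (L : ℕ), L0 j ≤ L →
      ((‖a (tr j) - a (tl j)‖₊ : ℝ≥0∞)) ≤ (∑ l ∈ Finset.range L, G l j) + τ j L := by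
    intro j L hL
    have hnn : ‖a (tr j) - a (tl j)‖₊ ≤
        (∑ l ∈ Finset.range L, (‖Ec j l‖₊ + ‖Dc j l‖₊))
          + (‖a (tr j) - a (gu n L (tr j))‖₊ + ‖a (gp n L (tl j)) - a (tl j)‖₊) := by
      rw [hid j L hL]
      calc ‖(∑ l ∈ Finset.range L, (Ec j l + Dc j l))
            + (a (tr j) - a (gu n L (tr j))) + (a (gp n L (tl j)) - a (tl j))‖₊
          ≤ ‖(∑ l ∈ Finset.range L, (Ec j l + Dc j l))
            + (a (tr j) - a (gu n L (tr j)))‖₊ + ‖a (gp n L (tl j)) - a (tl j)‖₊ :=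
            nnnorm_add_le _ _
        _ ≤ (‖∑ l ∈ Finset.range L, (Ec j l + Dc j l)‖₊
            + ‖a (tr j) - a (gu n L (tr j))‖₊) + ‖a (gp n L (tl j)) - a (tl j)‖₊ :=
            add_le_add (nnnorm_add_le _ _) le_rfl
        _ ≤ (∑ l ∈ Finset.range L, (‖Ec j l‖₊ + ‖Dc j l‖₊))
            + (‖a (tr j) - a (gu n L (tr j))‖₊ + ‖a (gp n L (tl j)) - a (tl j)‖₊) := by
            rw [add_assoc]
            refine add_le_add ?_ le_rfl
            exact (nnnorm_sum_le _ _).trans (Finset.sum_le_sum fun l _ => nnnorm_add_le _ _)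
    calc ((‖a (tr j) - a (tl j)‖₊ : ℝ≥0∞))
        ≤ (((∑ l ∈ Finset.range L, (‖Ec j l‖₊ + ‖Dc j l‖₊))
          + (‖a (tr j) - a (gu n L (tr j))‖₊ + ‖a (gp n L (tl j)) - a (tl j)‖₊) : ℝ≥0) : ℝ≥0∞) :=
          ENNReal.coe_le_coe.2 hnn
      _ = (∑ l ∈ Finset.range L, G l j) + τ j L := by
          rw [ENNReal.coe_add, ENNReal.coe_finset_sum]
  -- basic index facts
  have hglt : ∀ (sx : ℝ), sx ∈ Set.Ico ((2:ℝ)^n) ((2:ℝ)^(n+1)) → ∀ l : ℕ,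
      (gfl n l sx).toNat < 2^l ∧ ((gfl n l sx).toNat : ℤ) = gfl n l sx := by
    intro sx hs l
    have h1 := gfl_nonneg n hs.1 l
    have h2 := gfl_lt n hs.2 l
    have h3 : ((gfl n l sx).toNat : ℤ) = gfl n l sx := Int.toNat_of_nonneg h1
    refine ⟨?_, h3⟩
    have h4 : ((gfl n l sx).toNat : ℤ) < ((2^l : ℕ) : ℤ) := by
      rw [h3]
      exact_mod_cast h2
    exact_mod_cast h4
  have hsuccle : ∀ u v : Fin J, u < v → tr u ≤ tl v := by
    intro u v huv
    apply hst.monotone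
    rw [Fin.le_def]
    simp only [Fin.val_succ, Fin.coe_castSucc]
    rw [Fin.lt_def] at huv
    omega
  -- bound for the E-chain at a fixed scale
  have hbE : ∀ l : ℕ, (∑ j : Fin J, ((‖Ec j l‖₊ : ℝ≥0∞)) ^ r)
      ≤ ∑ k ∈ Finset.range (2^l), cterm a r n (l+1) (2*k) := by
    intro l
    set sf : Finset (Fin J) := Finset.univ.filter (fun j => L0 j ≤ l) with hsdef
    have hzero : ∀ j ∈ Finset.univ, j ∉ sf → ((‖Ec j l‖₊ : ℝ≥0∞)) ^ r = 0 := by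
      intro j _ hj
      have hc : ¬ L0 j ≤ l := by simpa [hsdef] using hj
      simp [hEcdef, hc, ENNReal.zero_rpow_of_pos hr0]
    rw [← Finset.sum_subset (Finset.subset_univ sf) hzero]
    set κ : Fin J → ℕ := fun j => (gfl n l (tr j)).toNat with hκdef
    have hpoint : ∀ j ∈ sf, ((‖Ec j l‖₊ : ℝ≥0∞)) ^ r ≤ cterm a r n (l+1) (2 * κ j) := by
      intro j hj
      have hjl : L0 j ≤ l := by simpa [hsdef] using hj
      have hE : Ec j l = a (gu n (l+1) (tr j)) - a (gu n l (tr j)) := if_pos hjl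
      have hcast := (hglt (tr j) (hmemR j) l).2
      rcases gfl_succ n l (tr j) with hcase | hcase
      · have heq : gu n (l+1) (tr j) = gu n l (tr j) := by
          unfold SVaux.gu
          rw [hcase, gpt_double]
        rw [hE, heq]
        simp [ENNReal.zero_rpow_of_pos hr0]
      · refine le_of_eq ?_
        rw [cterm_eq, hE]
        have e2 : gpt n (l+1) ((2 * κ j : ℕ) : ℤ) = gu n l (tr j) := by
          have hc : ((2 * κ j : ℕ) : ℤ) = 2 * gfl n l (tr j) := by
            simp only [hκdef]
            push_cast
            omega
          rw [hc, gpt_double]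
          rfl
        have e1 : gpt n (l+1) (((2 * κ j : ℕ) : ℤ) + 1) = gu n (l+1) (tr j) := by
          have hc : ((2 * κ j : ℕ) : ℤ) + 1 = gfl n (l+1) (tr j) := by
            rw [hcase]
            simp only [hκdef]
            push_cast
            omega
          rw [hc]
          rfl
        rw [e1, e2]
    refine (Finset.sum_le_sum hpoint).trans ?_
    have hinj : ∀ x ∈ sf, ∀ y ∈ sf, κ x = κ y → x = y := by
      have key : ∀ u v : Fin J, u ∈ sf → v ∈ sf → u < v → κ u ≠ κ v := by
        intro u v hu hv huv hk
        have hvl : L0 v ≤ l := by simpa [hsdef] using hv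
        have hgfl : gfl n l (tr u) = gfl n l (tr v) := by
          have c1 := (hglt (tr u) (hmemR u) l).2
          have c2 := (hglt (tr v) (hmemR v) l).2
          simp only [hκdef] at hk
          omega
        have hle : gu n l (tr v) ≤ tl v := by
          have heq : gu n l (tr v) = gu n l (tr u) := by
            unfold SVaux.gu
            rw [hgfl]
          rw [heq]
          exact (gu_le n l (tr u)).trans (hsuccle u v huv)
        exact absurd (hL0mono v l hvl) (not_lt.2 hle)
      intro x hx y hy hxy
      rcases lt_trichotomy x y with h|h|h
      · exact absurd hxy (key x y hx hy h)
      · exact h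
      · exact absurd hxy.symm (key y x hy hx h)
    calc ∑ j ∈ sf, cterm a r n (l+1) (2 * κ j)
        = ∑ k ∈ sf.image κ, cterm a r n (l+1) (2*k) :=
          (Finset.sum_image (f := fun k => cterm a r n (l+1) (2*k)) hinj).symm
      _ ≤ ∑ k ∈ Finset.range (2^l), cterm a r n (l+1) (2*k) := by
          refine Finset.sum_le_sum_of_subset ?_
          intro k hk
          obtain ⟨j, hj, rfl⟩ := Finset.mem_image.1 hk
          exact Finset.mem_range.2 (hglt (tr j) (hmemR j) l).1
  -- bound for the D-chain at a fixed scale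
  have hbD : ∀ l : ℕ, (∑ j : Fin J, ((‖Dc j l‖₊ : ℝ≥0∞)) ^ r)
      ≤ ∑ k ∈ Finset.range (2^l), cterm a r n (l+1) (2*k+1) := by
    intro l
    set sf : Finset (Fin J) := Finset.univ.filter (fun j => L0 j ≤ l) with hsdef
    have hzero : ∀ j ∈ Finset.univ, j ∉ sf → ((‖Dc j l‖₊ : ℝ≥0∞)) ^ r = 0 := by
      intro j _ hj
      have hc : ¬ L0 j ≤ l := by simpa [hsdef] using hj
      simp [hDcdef, hc, ENNReal.zero_rpow_of_pos hr0]
    rw [← Finset.sum_subset (Finset.subset_univ sf) hzero]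
    set κ : Fin J → ℕ := fun j => (gfl n l (tl j)).toNat with hκdef
    have hpoint : ∀ j ∈ sf, ((‖Dc j l‖₊ : ℝ≥0∞)) ^ r ≤ cterm a r n (l+1) (2 * κ j + 1) := by
      intro j hj
      have hjl : L0 j ≤ l := by simpa [hsdef] using hj
      have hD : Dc j l = a (gp n l (tl j)) - a (gp n (l+1) (tl j)) := if_pos hjl
      have hcast := (hglt (tl j) (hmemL j) l).2
      rcases gfl_succ n l (tl j) with hcase | hcase
      · -- even case: nonzero
        refine le_of_eq ?_
        rw [cterm_eq, hD]
        have e2 : gpt n (l+1) ((2 * κ j + 1 : ℕ) : ℤ) = gp n (l+1) (tl j) := by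
          have hc : ((2 * κ j + 1 : ℕ) : ℤ) = gfl n (l+1) (tl j) + 1 := by
            rw [hcase]
            simp only [hκdef]
            push_cast
            omega
          rw [hc]
          rfl
        have e1 : gpt n (l+1) (((2 * κ j + 1 : ℕ) : ℤ) + 1) = gp n l (tl j) := by
          have hc : ((2 * κ j + 1 : ℕ) : ℤ) + 1 = 2 * (gfl n l (tl j) + 1) := by
            simp only [hκdef]
            push_cast
            omega
          rw [hc, gpt_double]
          rfl
        rw [e1, e2]
      · -- odd case: Dc = 0
        have heq : gp n (l+1) (tl j) = gp n l (tl j) := by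
          unfold SVaux.gp
          rw [hcase]
          have hc : 2 * gfl n l (tl j) + 1 + 1 = 2 * (gfl n l (tl j) + 1) := by ring
          rw [hc, gpt_double]
        rw [hD, heq]
        simp [ENNReal.zero_rpow_of_pos hr0]
    refine (Finset.sum_le_sum hpoint).trans ?_
    have hinj : ∀ x ∈ sf, ∀ y ∈ sf, κ x = κ y → x = y := by
      have key : ∀ u v : Fin J, u ∈ sf → v ∈ sf → u < v → κ u ≠ κ v := by
        intro u v hu hv huv hk
        have hul : L0 u ≤ l := by simpa [hsdef] using hu
        have hgfl : gfl n l (tl u) = gfl n l (tl v) := by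
          have c1 := (hglt (tl u) (hmemL u) l).2
          have c2 := (hglt (tl v) (hmemL v) l).2
          simp only [hκdef] at hk
          omega
        -- gu n l (tr u) > tl u and gu n l (tr u) ≤ tl v < gp n l (tl v) = gpt (m+1)
        have h5 : tl u < gu n l (tr u) := hL0mono u l hul
        have h6 : gu n l (tr u) ≤ tl v := (gu_le n l (tr u)).trans (hsuccle u v huv)
        have h7 : gfl n l (tl u) < gfl n l (tr u) := by
          have hgpt : gpt n l (gfl n l (tl u)) < gpt n l (gfl n l (tr u)) :=
            lt_of_le_of_lt (gu_le n l (tl u)) h5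
          exact (gpt_lt_gpt n).1 hgpt
        have h8 : gpt n l (gfl n l (tl v) + 1) ≤ gpt n l (gfl n l (tr u)) :=
          (gpt_le_gpt n).2 (by omega)
        have h9 : tl v < gpt n l (gfl n l (tl v) + 1) := lt_gp n l (tl v)
        have : gu n l (tr u) = gpt n l (gfl n l (tr u)) := rfl
        linarith [h8, h9, h6, this ▸ h6]
      intro x hx y hy hxy
      rcases lt_trichotomy x y with h|h|h
      · exact absurd hxy (key x y hx hy h)
      · exact h
      · exact absurd hxy.symm (key y x hy hx h)
    calc ∑ j ∈ sf, cterm a r n (l+1) (2 * κ j + 1)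
        = ∑ k ∈ sf.image κ, cterm a r n (l+1) (2*k+1) :=
          (Finset.sum_image (f := fun k => cterm a r n (l+1) (2*k+1)) hinj).symm
      _ ≤ ∑ k ∈ Finset.range (2^l), cterm a r n (l+1) (2*k+1) := by
          refine Finset.sum_le_sum_of_subset ?_
          intro k hk
          obtain ⟨j, hj, rfl⟩ := Finset.mem_image.1 hk
          exact Finset.mem_range.2 (hglt (tl j) (hmemL j) l).1
  -- per-scale combination
  have hPerL : ∀ l : ℕ, (∑ j : Fin J, (G l j) ^ r) ^ (1/r) ≤ C * Ssum a r n (l+1) := by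
    intro l
    have hGeq : ∀ j, G l j = (‖Ec j l‖₊ : ℝ≥0∞) + (‖Dc j l‖₊ : ℝ≥0∞) := fun j => by
      rw [hGdef]
      exact_mod_cast rfl
    calc (∑ j : Fin J, (G l j) ^ r) ^ (1/r)
        = (∑ j : Fin J, ((‖Ec j l‖₊ : ℝ≥0∞) + (‖Dc j l‖₊ : ℝ≥0∞)) ^ r) ^ (1/r) := by
          simp_rw [hGeq]
      _ ≤ (∑ j : Fin J, ((‖Ec j l‖₊:ℝ≥0∞)) ^ r) ^ (1/r)
          + (∑ j : Fin J, ((‖Dc j l‖₊:ℝ≥0∞)) ^ r) ^ (1/r) :=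
          ENNReal.Lp_add_le Finset.univ _ _ hr
      _ ≤ (∑ k ∈ Finset.range (2^l), cterm a r n (l+1) (2*k)) ^ (1/r)
          + (∑ k ∈ Finset.range (2^l), cterm a r n (l+1) (2*k+1)) ^ (1/r) :=
          add_le_add (ENNReal.rpow_le_rpow (hbE l) h1r.le) (ENNReal.rpow_le_rpow (hbD l) h1r.le)
      _ ≤ C * ((∑ k ∈ Finset.range (2^l), cterm a r n (l+1) (2*k))
          + ∑ k ∈ Finset.range (2^l), cterm a r n (l+1) (2*k+1)) ^ (1/r) := combine_rpow hr _ _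
      _ = C * Ssum a r n (l+1) := by
          rw [Ssum]
          congr 2
          rw [show (2:ℕ)^(l+1) = 2 * 2^l by ring, sum_range_two_mul]
          exact (Finset.sum_add_distrib).symm
  -- the tail tends to zero
  have htend : ∀ j : Fin J, Filter.Tendsto (fun L => τ j L) Filter.atTop (nhds 0) := by
    intro j
    have hmem' : tr j ∈ Set.Icc ((2:ℝ)^n) ((2:ℝ)^(n+1)) := Set.Ico_subset_Icc_self (hmemR j)
    have hmem'' : tl j ∈ Set.Icc ((2:ℝ)^n) ((2:ℝ)^(n+1)) := Set.Ico_subset_Icc_self (hmemL j)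
    have h1 : Filter.Tendsto (fun L => a (gu n L (tr j))) Filter.atTop (nhds (a (tr j))) := by
      have hto : Filter.Tendsto (fun L => gu n L (tr j)) Filter.atTop
          (nhdsWithin (tr j) (Set.Icc ((2:ℝ)^n) ((2:ℝ)^(n+1)))) := by
        rw [tendsto_nhdsWithin_iff]
        exact ⟨tendsto_gu n _, Filter.Eventually.of_forall fun L => gu_mem n (hmemR j) L⟩
      exact (ha (tr j) hmem').tendsto.comp hto
    have h2 : Filter.Tendsto (fun L => a (gp n L (tl j))) Filter.atTop (nhds (a (tl j))) := by
      have hto : Filter.Tendsto (fun L => gp n L (tl j)) Filter.atTop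
          (nhdsWithin (tl j) (Set.Icc ((2:ℝ)^n) ((2:ℝ)^(n+1)))) := by
        rw [tendsto_nhdsWithin_iff]
        exact ⟨tendsto_gp n _, Filter.Eventually.of_forall fun L => gp_mem n (hmemL j) L⟩
      exact (ha (tl j) hmem'').tendsto.comp hto
    have h3 : Filter.Tendsto (fun L => ‖a (tr j) - a (gu n L (tr j))‖₊) Filter.atTop (nhds 0) := by
      have := ((tendsto_const_nhds (x := a (tr j))).sub h1).nnnorm
      simpa using this
    have h4 : Filter.Tendsto (fun L => ‖a (gp n L (tl j)) - a (tl j)‖₊) Filter.atTop (nhds 0) := by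
      have := (h2.sub (tendsto_const_nhds (x := a (tl j)))).nnnorm
      simpa using this
    have h5 := h3.add h4
    have h6 := ENNReal.tendsto_coe.2 h5
    simpa [hτdef] using h6
  have hTail : Filter.Tendsto (fun L => (∑ j : Fin J, (τ j L) ^ r) ^ (1/r))
      Filter.atTop (nhds 0) := by
    have h4 : ∀ j : Fin J, Filter.Tendsto (fun L => (τ j L) ^ r) Filter.atTop (nhds 0) := by
      intro j
      have hcomp := ((ENNReal.continuous_rpow_const (y := r)).tendsto (0:ℝ≥0∞)).comp (htend j)
      simpa [Function.comp_def, ENNReal.zero_rpow_of_pos hr0] using hcomp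
    have h5 : Filter.Tendsto (fun L => ∑ j : Fin J, (τ j L) ^ r) Filter.atTop (nhds 0) := by
      have := tendsto_finset_sum Finset.univ (fun j (_ : j ∈ Finset.univ) => h4 j)
      simpa using this
    have hcomp := ((ENNReal.continuous_rpow_const (y := 1/r)).tendsto (0:ℝ≥0∞)).comp h5
    have h0 : ((0:ℝ≥0∞)) ^ (1/r) = 0 := ENNReal.zero_rpow_of_pos h1r
    rw [one_div] at h0
    simpa [Function.comp_def, one_div, h0] using hcomp
  -- the eventual bound
  have hev : ∀ᶠ L in Filter.atTop,
      (∑ j : Fin J, ((‖a (t j.succ) - a (t j.castSucc)‖₊ : ℝ≥0∞)) ^ r) ^ (1/r)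
        ≤ B + (∑ j : Fin J, (τ j L) ^ r) ^ (1/r) := by
    have hLL : ∀ᶠ L in Filter.atTop, ∀ j : Fin J, L0 j ≤ L := by
      rw [Filter.eventually_all]
      exact fun j => Filter.eventually_ge_atTop (L0 j)
    filter_upwards [hLL] with L hL
    have step1 : (∑ j : Fin J, ((‖a (t j.succ) - a (t j.castSucc)‖₊ : ℝ≥0∞)) ^ r) ^ (1/r)
        ≤ (∑ j : Fin J, ((∑ l ∈ Finset.range L, G l j) + τ j L) ^ r) ^ (1/r) := by
      refine ENNReal.rpow_le_rpow (Finset.sum_le_sum fun j _ => ?_) h1r.le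
      exact ENNReal.rpow_le_rpow (hnorm j L (hL j)) hr0.le
    refine step1.trans ?_
    refine (ENNReal.Lp_add_le Finset.univ _ _ hr).trans ?_
    refine add_le_add ?_ le_rfl
    refine (mink_finset hr L G).trans ?_
    refine (Finset.sum_le_sum fun l _ => hPerL l).trans ?_
    rw [← Finset.mul_sum, hBdef]
    refine mul_le_mul_right ?_ C
    refine (ENNReal.sum_le_tsum _).trans ?_
    exact ENNReal.tsum_comp_le_tsum_of_injective Nat.succ_injective _
  -- conclude
  by_cases hBtop : B = ⊤
  · rw [hBtop]
    exact le_top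
  · refine ge_of_tendsto ?_ hev
    have := Filter.Tendsto.add (tendsto_const_nhds (x := B)) hTail
    simpa using this
end ShortVarMain

/-- Domination of short `r`-variations over `[2^n, 2^{n+1})` by sums over dyadic
subdivision scales (Lemma 2.1). -/
theorem short_variation_dyadic_domination (r : ℝ) (hr : 1 ≤ r) (n : ℤ)
    (a : ℝ → ℂ) (ha : ContinuousOn a (Set.Icc ((2:ℝ) ^ n) ((2:ℝ) ^ (n + 1)))) :
    Vr r a (Set.Ico ((2:ℝ) ^ n) ((2:ℝ) ^ (n + 1)))
      ≤ ENNReal.ofReal ((2:ℝ) ^ (1 - 1 / r)) *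
        ∑' l : ℕ, (∑ k ∈ Finset.range (2 ^ l),
          ((‖a ((2:ℝ) ^ n + (2:ℝ) ^ (n - (l:ℤ)) * ((k:ℝ) + 1)) -
              a ((2:ℝ) ^ n + (2:ℝ) ^ (n - (l:ℤ)) * (k:ℝ))‖₊ : ℝ≥0∞)) ^ r) ^ (1 / r) := by
  exact short_variation_dyadic_domination' r hr n a ha

end
end

section
/- Let 𝔞 : (0, ∞) → [0, ∞) be a differentiable function. Then with an absolute implied constant: (i) for real numbers u < v and every r ∈ [2, ∞), V_r(𝔞_t : t ∈ [u, v)) ≲ ( ∫_u^v |𝔞_t|^2 dt/t )^{1/4} · ( ∫_u^v |t 𝔞'_t|^2 dt/t )^{1/4}; (ii) for every l ∈ ℤ and r ∈ [2, ∞), V_r(𝔞_t : t ∈ [2^l, 2^{l+1})) ≲ ( ∫_{2^l}^{2^{l+1}} |t 𝔞'_t|^2 dt/t )^{1/2}; consequently (iii) ( Σ_{n∈ℤ} V_2(𝔞_t : t ∈ [2^n, 2^{n+1}))^2 )^{1/2} ≲ ( ∫_0^∞ |t 𝔞'_t|^2 dt/t )^{1/2}. -/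
open MeasureTheory ENNReal Set
open scoped Pointwise NNReal

noncomputable section

namespace VSFB

/-- `ℓ^r ≤ ℓ^1` for `r ≥ 1` in `ℝ≥0∞`. -/
lemma sum_rpow_le_rpow_sum {J : ℕ} (x : Fin J → ℝ≥0∞) {r : ℝ} (hr : 1 ≤ r) :
    ∑ j, x j ^ r ≤ (∑ j, x j) ^ r := by
  have hr0 : (0:ℝ) < r := lt_of_lt_of_le one_pos hr
  set S := ∑ j, x j with hS
  by_cases hStop : S = ⊤
  · rw [hStop, ENNReal.top_rpow_of_pos hr0]; exact le_top
  by_cases hS0 : S = 0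
  · have : ∀ j ∈ Finset.univ, x j = 0 := by
      intro j _
      exact le_antisymm (hS0 ▸ Finset.single_le_sum (f := x) (fun _ _ => zero_le)
        (Finset.mem_univ j)) zero_le
    rw [hS0, ENNReal.zero_rpow_of_pos hr0]
    refine le_of_eq ?_
    refine Finset.sum_eq_zero fun j hj => ?_
    rw [this j hj, ENNReal.zero_rpow_of_pos hr0]
  · calc ∑ j, x j ^ r ≤ ∑ j, x j * S ^ (r - 1) := by
          refine Finset.sum_le_sum fun j _ => ?_
          have hxS : x j ≤ S := Finset.single_le_sum (f := x) (fun _ _ => zero_le)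
            (Finset.mem_univ j)
          by_cases hx0 : x j = 0
          · rw [hx0, ENNReal.zero_rpow_of_pos hr0]; exact zero_le
          · have hxt : x j ≠ ⊤ := fun h => hStop (top_le_iff.mp (h ▸ hxS))
            calc x j ^ r = x j ^ (1 + (r-1)) := by ring_nf
              _ = x j ^ (1:ℝ) * x j ^ (r-1) := ENNReal.rpow_add _ _ hx0 hxt
              _ ≤ x j * S ^ (r-1) := by
                  rw [ENNReal.rpow_one]
                  exact mul_le_mul_right (ENNReal.rpow_le_rpow hxS (by linarith)) _
      _ = S * S ^ (r-1) := by rw [← Finset.sum_mul]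
      _ = S ^ (1:ℝ) * S ^ (r-1) := by rw [ENNReal.rpow_one]
      _ = S ^ (1 + (r-1)) := (ENNReal.rpow_add _ _ hS0 hStop).symm
      _ = S ^ r := by ring_nf

lemma nnnorm_sub_le_lintegral_deriv {f : ℝ → ℝ} {s t : ℝ} (hs : 0 < s) (hst : s ≤ t)
    (hf : ∀ x : ℝ, 0 < x → DifferentiableAt ℝ f x) :
    (‖f t - f s‖₊ : ℝ≥0∞) ≤ ∫⁻ x in Ioo s t, ‖deriv f x‖₊ := by
  rcases eq_or_lt_of_le hst with rfl | hlt
  · simp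
  by_cases hL : (∫⁻ x in Ioo s t, (‖deriv f x‖₊ : ℝ≥0∞)) = ⊤
  · rw [hL]; exact le_top
  have hmeas : Measurable (deriv f) := measurable_deriv f
  have hInt : IntegrableOn (deriv f) (Ioo s t) := by
    refine ⟨hmeas.aestronglyMeasurable.restrict, ?_⟩
    rw [HasFiniteIntegral]
    exact lt_top_iff_ne_top.mpr hL
  have hIoc : IntegrableOn (deriv f) (Ioc s t) :=
    (integrableOn_Ioc_iff_integrableOn_Ioo).mpr hInt
  have hii : IntervalIntegrable (deriv f) volume s t :=
    (intervalIntegrable_iff_integrableOn_Ioc_of_le hst).mpr hIoc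
  have hftc : ∫ y in s..t, deriv f y = f t - f s := by
    refine intervalIntegral.integral_deriv_eq_sub (fun x hx => ?_) hii
    rw [uIcc_of_le hst] at hx
    exact hf x (lt_of_lt_of_le hs hx.1)
  calc (‖f t - f s‖₊ : ℝ≥0∞) = ENNReal.ofReal ‖f t - f s‖ := (ofReal_norm _).symm
    _ = ENNReal.ofReal ‖∫ y in s..t, deriv f y‖ := by rw [hftc]
    _ ≤ ENNReal.ofReal (∫ y in s..t, ‖deriv f y‖) :=
        ENNReal.ofReal_le_ofReal (intervalIntegral.norm_integral_le_integral_norm hst)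
    _ = ENNReal.ofReal (∫ y in Ioc s t, ‖deriv f y‖) := by
        rw [intervalIntegral.integral_of_le hst]
    _ = ∫⁻ y in Ioc s t, ‖deriv f y‖₊ :=
        ofReal_integral_norm_eq_lintegral_enorm hIoc
    _ = ∫⁻ y in Ioo s t, ‖deriv f y‖₊ := (setLIntegral_congr Ioo_ae_eq_Ioc).symm

lemma sq_nnnorm_sub_le {a : ℝ → ℝ} (ha0 : ∀ x : ℝ, 0 < x → 0 ≤ a x)
    (ha : ∀ x : ℝ, 0 < x → DifferentiableAt ℝ a x) {s t : ℝ} (hs : 0 < s) (hst : s ≤ t) :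
    (‖a t - a s‖₊ : ℝ≥0∞) ^ (2:ℝ) ≤ 2 * ∫⁻ x in Ioo s t, ‖a x * deriv a x‖₊ := by
  have hf : ∀ x : ℝ, 0 < x → DifferentiableAt ℝ (fun y => a y * a y) x :=
    fun x hx => (ha x hx).mul (ha x hx)
  have h1 : (‖a t * a t - a s * a s‖₊ : ℝ≥0∞)
      ≤ ∫⁻ x in Ioo s t, ‖deriv (fun y => a y * a y) x‖₊ :=
    nnnorm_sub_le_lintegral_deriv hs hst hf
  have h2 : ∫⁻ x in Ioo s t, (‖deriv (fun y => a y * a y) x‖₊ : ℝ≥0∞)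
      = ∫⁻ x in Ioo s t, 2 * ‖a x * deriv a x‖₊ := by
    refine setLIntegral_congr_fun measurableSet_Ioo (fun x hx => ?_)
    have hx0 : 0 < x := lt_trans hs hx.1
    have hd : deriv (fun y => a y * a y) x = 2 * (a x * deriv a x) := by
      rw [deriv_fun_mul (ha x hx0) (ha x hx0)]; ring
    rw [hd]
    push_cast [nnnorm_mul]
    norm_num
  have h3 : ∫⁻ x in Ioo s t, 2 * (‖a x * deriv a x‖₊ : ℝ≥0∞)
      = 2 * ∫⁻ x in Ioo s t, ‖a x * deriv a x‖₊ :=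
    lintegral_const_mul' 2 _ (by norm_num)
  have key : (‖a t - a s‖₊ : ℝ≥0∞) ^ (2:ℝ) ≤ (‖a t * a t - a s * a s‖₊ : ℝ≥0∞) := by
    rw [← enorm_eq_nnnorm, ← enorm_eq_nnnorm, ← ofReal_norm, ← ofReal_norm,
      ENNReal.ofReal_rpow_of_nonneg (norm_nonneg _) (by norm_num : (0:ℝ) ≤ 2)]
    refine ENNReal.ofReal_le_ofReal ?_
    have h4 := ha0 s hs
    have h5 := ha0 t (lt_of_lt_of_le hs hst)
    have h6 : ‖a t - a s‖ ^ (2:ℝ) = ‖a t - a s‖ ^ (2:ℕ) := by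
      rw [← Real.rpow_natCast]; norm_num
    rw [h6, Real.norm_eq_abs, Real.norm_eq_abs, sq_abs]
    have h7 : a t * a t - a s * a s = (a t - a s) * (a t + a s) := by ring
    have h8 : |a t - a s| ≤ a t + a s := abs_le.mpr ⟨by linarith, by linarith⟩
    rw [h7, abs_mul, abs_of_nonneg (by linarith : (0:ℝ) ≤ a t + a s)]
    nlinarith [sq_abs (a t - a s), abs_nonneg (a t - a s)]
  calc (‖a t - a s‖₊ : ℝ≥0∞) ^ (2:ℝ) ≤ _ := key
    _ ≤ _ := h1.trans (le_of_eq (h2.trans h3))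

lemma conj22 : Real.HolderConjugate 2 2 := Real.HolderConjugate.two_two

lemma meas_w : Measurable fun x : ℝ => ENNReal.ofReal (1/x) :=
  ENNReal.measurable_ofReal.comp (measurable_const.div measurable_id)

lemma w_pos {x : ℝ} (hx : 0 < x) : ENNReal.ofReal (1/x) ≠ 0 := by
  simp [ENNReal.ofReal_eq_zero, not_le, hx]

lemma half_mul_half {x : ℝ} (hx : 0 < x) :
    (ENNReal.ofReal (1/x)) ^ ((1:ℝ)/2) * (ENNReal.ofReal (1/x)) ^ ((1:ℝ)/2)
      = ENNReal.ofReal (1/x) := by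
  rw [← ENNReal.rpow_add _ _ (w_pos hx) ENNReal.ofReal_ne_top]
  norm_num

lemma sq_half {y : ℝ≥0∞} : (y ^ ((1:ℝ)/2)) ^ (2:ℝ) = y := by
  rw [← ENNReal.rpow_mul]; norm_num

/-- Cauchy–Schwarz estimate used for part (ii). -/
lemma lintegral_deriv_le_CS {a : ℝ → ℝ} {s t : ℝ} (hs : 0 < s) :
    ∫⁻ x in Ioo s t, (‖deriv a x‖₊ : ℝ≥0∞)
      ≤ (∫⁻ x in Ioo s t, (‖x * deriv a x‖₊ : ℝ≥0∞) ^ (2:ℝ) * ENNReal.ofReal (1/x)) ^ ((1:ℝ)/2)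
        * (∫⁻ x in Ioo s t, ENNReal.ofReal (1/x)) ^ ((1:ℝ)/2) := by
  set F : ℝ → ℝ≥0∞ := fun x => (‖x * deriv a x‖₊ : ℝ≥0∞) * (ENNReal.ofReal (1/x)) ^ ((1:ℝ)/2)
    with hF
  set G : ℝ → ℝ≥0∞ := fun x => (ENNReal.ofReal (1/x)) ^ ((1:ℝ)/2) with hG
  have hFmeas : Measurable F := ((measurable_id.mul (measurable_deriv a)).enorm).mul
    (meas_w.pow measurable_const)
  have hGmeas : Measurable G := meas_w.pow measurable_const
  have key : ∫⁻ x in Ioo s t, (‖deriv a x‖₊ : ℝ≥0∞) = ∫⁻ x in Ioo s t, F x * G x := by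
    refine setLIntegral_congr_fun measurableSet_Ioo (fun x hx => ?_)
    have hx0 : 0 < x := lt_trans hs hx.1
    rw [hF, hG]
    simp only
    rw [mul_assoc, half_mul_half hx0, nnnorm_mul, ENNReal.coe_mul,
      ← enorm_eq_nnnorm x, Real.enorm_eq_ofReal hx0.le, mul_comm (ENNReal.ofReal x) _, mul_assoc,
      ← ENNReal.ofReal_mul hx0.le, mul_one_div, div_self hx0.ne', ENNReal.ofReal_one, mul_one]
  rw [key]
  have := ENNReal.lintegral_mul_le_Lp_mul_Lq (volume.restrict (Ioo s t)) conj22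
    hFmeas.aemeasurable hGmeas.aemeasurable
  have e1 : ∫⁻ x in Ioo s t, F x ^ (2:ℝ)
      = ∫⁻ x in Ioo s t, (‖x * deriv a x‖₊ : ℝ≥0∞) ^ (2:ℝ) * ENNReal.ofReal (1/x) := by
    refine lintegral_congr fun x => ?_
    rw [hF]; simp only
    rw [ENNReal.mul_rpow_of_nonneg _ _ (by norm_num : (0:ℝ) ≤ 2), sq_half]
  have e2 : ∫⁻ x in Ioo s t, G x ^ (2:ℝ) = ∫⁻ x in Ioo s t, ENNReal.ofReal (1/x) := by
    refine lintegral_congr fun x => ?_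
    rw [hG]; simp only [sq_half]
  refine this.trans (le_of_eq ?_)
  norm_num at e1 e2 ⊢
  rw [e1, e2]

/-- Cauchy–Schwarz estimate used for part (i). -/
lemma lintegral_aderiv_le_CS {a : ℝ → ℝ} {s t : ℝ} (hs : 0 < s)
    (ha : ∀ x : ℝ, 0 < x → DifferentiableAt ℝ a x) :
    ∫⁻ x in Ioo s t, (‖a x * deriv a x‖₊ : ℝ≥0∞)
      ≤ (∫⁻ x in Ioo s t, (‖a x‖₊ : ℝ≥0∞) ^ (2:ℝ) * ENNReal.ofReal (1/x)) ^ ((1:ℝ)/2)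
        * (∫⁻ x in Ioo s t, (‖x * deriv a x‖₊ : ℝ≥0∞) ^ (2:ℝ) * ENNReal.ofReal (1/x)) ^ ((1:ℝ)/2) := by
  set F : ℝ → ℝ≥0∞ := fun x => (‖a x‖₊ : ℝ≥0∞) * (ENNReal.ofReal (1/x)) ^ ((1:ℝ)/2) with hF
  set G : ℝ → ℝ≥0∞ := fun x => (‖x * deriv a x‖₊ : ℝ≥0∞) * (ENNReal.ofReal (1/x)) ^ ((1:ℝ)/2)
    with hG
  have haC : ContinuousOn a (Ioo s t) := fun x hx =>
    (ha x (lt_trans hs hx.1)).continuousAt.continuousWithinAt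
  have hFmeas : AEMeasurable F (volume.restrict (Ioo s t)) :=
    ((haC.aemeasurable measurableSet_Ioo).enorm).mul
      ((meas_w.pow measurable_const).aemeasurable)
  have hGmeas : Measurable G := ((measurable_id.mul (measurable_deriv a)).enorm).mul
    (meas_w.pow measurable_const)
  have key : ∫⁻ x in Ioo s t, (‖a x * deriv a x‖₊ : ℝ≥0∞) = ∫⁻ x in Ioo s t, F x * G x := by
    refine setLIntegral_congr_fun measurableSet_Ioo (fun x hx => ?_)
    have hx0 : 0 < x := lt_trans hs hx.1
    have hxw : ENNReal.ofReal x * ENNReal.ofReal (1/x) = 1 := by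
      rw [← ENNReal.ofReal_mul hx0.le, mul_one_div, div_self hx0.ne', ENNReal.ofReal_one]
    have h1 : F x * G x = (‖a x‖₊ : ℝ≥0∞) * ‖deriv a x‖₊ *
        (ENNReal.ofReal x *
          ((ENNReal.ofReal (1/x)) ^ ((1:ℝ)/2) * (ENNReal.ofReal (1/x)) ^ ((1:ℝ)/2))) := by
      rw [hF, hG]; simp only
      rw [nnnorm_mul, ENNReal.coe_mul, ← enorm_eq_nnnorm x, Real.enorm_eq_ofReal hx0.le]
      ring
    rw [h1, half_mul_half hx0, hxw, mul_one, ← ENNReal.coe_mul, ← nnnorm_mul]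
  rw [key]
  have := ENNReal.lintegral_mul_le_Lp_mul_Lq (volume.restrict (Ioo s t)) conj22
    hFmeas hGmeas.aemeasurable
  have e1 : ∫⁻ x in Ioo s t, F x ^ (2:ℝ)
      = ∫⁻ x in Ioo s t, (‖a x‖₊ : ℝ≥0∞) ^ (2:ℝ) * ENNReal.ofReal (1/x) := by
    refine lintegral_congr fun x => ?_
    rw [hF]; simp only
    rw [ENNReal.mul_rpow_of_nonneg _ _ (by norm_num : (0:ℝ) ≤ 2), sq_half]
  have e2 : ∫⁻ x in Ioo s t, G x ^ (2:ℝ)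
      = ∫⁻ x in Ioo s t, (‖x * deriv a x‖₊ : ℝ≥0∞) ^ (2:ℝ) * ENNReal.ofReal (1/x) := by
    refine lintegral_congr fun x => ?_
    rw [hG]; simp only
    rw [ENNReal.mul_rpow_of_nonneg _ _ (by norm_num : (0:ℝ) ≤ 2), sq_half]
  refine this.trans (le_of_eq ?_)
  norm_num at e1 e2 ⊢
  rw [e1, e2]

lemma sum_lintegral_Ioo_le (g : ℝ → ℝ≥0∞) {J : ℕ} {t : Fin (J+1) → ℝ} (hmono : StrictMono t)
    {u v : ℝ} (hsub : ∀ j : Fin J, Ioo (t j.castSucc) (t j.succ) ⊆ Ioo u v) :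
    ∑ j : Fin J, ∫⁻ x in Ioo (t j.castSucc) (t j.succ), g x ≤ ∫⁻ x in Ioo u v, g x := by
  set S : Fin J → Set ℝ := fun j => Ioo (t j.castSucc) (t j.succ) with hS
  have key : ∀ i j : Fin J, i < j → Disjoint (S i) (S j) := by
    intro i j hlt
    have hle : t i.succ ≤ t j.castSucc := by
      apply hmono.monotone
      rw [Fin.le_def]
      simp only [Fin.val_succ, Fin.coe_castSucc]
      exact hlt
    rw [Set.disjoint_left]
    intro x hx hx'
    exact absurd ((hx.2.trans_le hle).trans hx'.1) (lt_irrefl x)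
  have hd : Pairwise (Function.onFun Disjoint S) := by
    intro i j hij
    rcases hij.lt_or_gt with h | h
    · exact key i j h
    · exact (key j i h).symm
  have := lintegral_iUnion (μ := volume) (fun j : Fin J => measurableSet_Ioo) hd g
  calc ∑ j : Fin J, ∫⁻ x in S j, g x = ∑' j : Fin J, ∫⁻ x in S j, g x := (tsum_fintype _).symm
    _ = ∫⁻ x in ⋃ j, S j, g x := this.symm
    _ ≤ ∫⁻ x in Ioo u v, g x := lintegral_mono_set (Set.iUnion_subset hsub)

/-- Part (i) with explicit constant `2`. -/
lemma partI {a : ℝ → ℝ} (ha0 : ∀ x : ℝ, 0 < x → 0 ≤ a x)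
    (ha : ∀ x : ℝ, 0 < x → DifferentiableAt ℝ a x) {u v r : ℝ}
    (hu : 0 < u) (huv : u < v) (hr : 2 ≤ r) :
    Vr r a (Set.Ico u v)
      ≤ ENNReal.ofReal 2 *
        ((∫⁻ x in Ioo u v, (‖a x‖₊ : ℝ≥0∞) ^ (2:ℝ) * ENNReal.ofReal (1/x)) ^ ((1:ℝ)/4) *
         (∫⁻ x in Ioo u v, (‖x * deriv a x‖₊ : ℝ≥0∞) ^ (2:ℝ) * ENNReal.ofReal (1/x)) ^ ((1:ℝ)/4)) := by
  set A := ∫⁻ x in Ioo u v, (‖a x‖₊ : ℝ≥0∞) ^ (2:ℝ) * ENNReal.ofReal (1/x) with hA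
  set B := ∫⁻ x in Ioo u v, (‖x * deriv a x‖₊ : ℝ≥0∞) ^ (2:ℝ) * ENNReal.ofReal (1/x) with hB
  have hr0 : (0:ℝ) < r := by linarith
  rw [Vr]
  refine iSup_le fun J => iSup_le fun t => iSup_le fun hmono => iSup_le fun hmem => ?_
  set Δ : Fin J → ℝ≥0∞ := fun j => (‖a (t j.succ) - a (t j.castSucc)‖₊ : ℝ≥0∞) with hΔ
  have hpos : ∀ j : Fin (J+1), 0 < t j := fun j => lt_of_lt_of_le hu (hmem j).1
  have hsub : ∀ j : Fin J, Ioo (t j.castSucc) (t j.succ) ⊆ Ioo u v := by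
    intro j x hx
    exact ⟨lt_of_le_of_lt (hmem j.castSucc).1 hx.1, lt_trans hx.2 (hmem j.succ).2⟩
  have step1 : ∑ j : Fin J, Δ j ^ (2:ℝ) ≤ 2 * (A ^ ((1:ℝ)/2) * B ^ ((1:ℝ)/2)) := by
    calc ∑ j : Fin J, Δ j ^ (2:ℝ)
        ≤ ∑ j : Fin J, 2 * ∫⁻ x in Ioo (t j.castSucc) (t j.succ), (‖a x * deriv a x‖₊ : ℝ≥0∞) :=
          Finset.sum_le_sum fun j _ =>
            sq_nnnorm_sub_le ha0 ha (hpos _) (hmono j.castSucc_lt_succ).le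
      _ = 2 * ∑ j : Fin J, ∫⁻ x in Ioo (t j.castSucc) (t j.succ), (‖a x * deriv a x‖₊ : ℝ≥0∞) :=
          (Finset.mul_sum _ _ _).symm
      _ ≤ 2 * ∫⁻ x in Ioo u v, (‖a x * deriv a x‖₊ : ℝ≥0∞) :=
          mul_le_mul_right (sum_lintegral_Ioo_le _ hmono hsub) 2
      _ ≤ 2 * (A ^ ((1:ℝ)/2) * B ^ ((1:ℝ)/2)) :=
          mul_le_mul_right (lintegral_aderiv_le_CS hu ha) 2
  have step2 : (∑ j : Fin J, Δ j ^ r) ^ (1/r) ≤ (∑ j : Fin J, Δ j ^ (2:ℝ)) ^ ((1:ℝ)/2) := by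
    have h2r : ∑ j : Fin J, Δ j ^ r ≤ (∑ j : Fin J, Δ j ^ (2:ℝ)) ^ (r/2) := by
      have := sum_rpow_le_rpow_sum (fun j => Δ j ^ (2:ℝ)) (r := r/2) (by linarith)
      refine le_trans (le_of_eq ?_) this
      refine Finset.sum_congr rfl fun j _ => ?_
      rw [← ENNReal.rpow_mul]
      congr 1
      field_simp
    calc (∑ j : Fin J, Δ j ^ r) ^ (1/r)
        ≤ ((∑ j : Fin J, Δ j ^ (2:ℝ)) ^ (r/2)) ^ (1/r) :=
          ENNReal.rpow_le_rpow h2r (by positivity)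
      _ = (∑ j : Fin J, Δ j ^ (2:ℝ)) ^ ((1:ℝ)/2) := by
          rw [← ENNReal.rpow_mul]
          congr 1
          field_simp
  refine step2.trans ?_
  calc (∑ j : Fin J, Δ j ^ (2:ℝ)) ^ ((1:ℝ)/2)
      ≤ (2 * (A ^ ((1:ℝ)/2) * B ^ ((1:ℝ)/2))) ^ ((1:ℝ)/2) :=
        ENNReal.rpow_le_rpow step1 (by norm_num)
    _ = (2:ℝ≥0∞) ^ ((1:ℝ)/2) * (A ^ ((1:ℝ)/2) * B ^ ((1:ℝ)/2)) ^ ((1:ℝ)/2) :=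
        ENNReal.mul_rpow_of_nonneg _ _ (by norm_num)
    _ = (2:ℝ≥0∞) ^ ((1:ℝ)/2) * ((A ^ ((1:ℝ)/2)) ^ ((1:ℝ)/2) * (B ^ ((1:ℝ)/2)) ^ ((1:ℝ)/2)) := by
        rw [ENNReal.mul_rpow_of_nonneg _ _ (by norm_num : (0:ℝ) ≤ 1/2)]
    _ = (2:ℝ≥0∞) ^ ((1:ℝ)/2) * (A ^ ((1:ℝ)/4) * B ^ ((1:ℝ)/4)) := by
        rw [← ENNReal.rpow_mul, ← ENNReal.rpow_mul]; norm_num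
    _ ≤ ENNReal.ofReal 2 * (A ^ ((1:ℝ)/4) * B ^ ((1:ℝ)/4)) := by
        refine mul_le_mul_left ?_ _
        rw [ENNReal.ofReal_ofNat]
        calc (2:ℝ≥0∞) ^ ((1:ℝ)/2) ≤ (2:ℝ≥0∞) ^ (1:ℝ) :=
              ENNReal.rpow_le_rpow_of_exponent_le one_le_two (by norm_num)
          _ = 2 := ENNReal.rpow_one 2

lemma two_zpow_pos (l : ℤ) : (0:ℝ) < 2 ^ l := by positivity

lemma weight_integral_le_one (l : ℤ) :
    (∫⁻ x in Ioo ((2:ℝ)^l) ((2:ℝ)^(l+1)), ENNReal.ofReal (1/x)) ≤ 1 := by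
  have h0 : (0:ℝ) < 2 ^ l := two_zpow_pos l
  calc (∫⁻ x in Ioo ((2:ℝ)^l) ((2:ℝ)^(l+1)), ENNReal.ofReal (1/x))
      ≤ ∫⁻ _ in Ioo ((2:ℝ)^l) ((2:ℝ)^(l+1)), ENNReal.ofReal (1/2^l) := by
        refine setLIntegral_mono measurable_const fun x hx => ?_
        exact ENNReal.ofReal_le_ofReal (one_div_le_one_div_of_le h0 hx.1.le)
    _ = ENNReal.ofReal (1/2^l) * volume (Ioo ((2:ℝ)^l) ((2:ℝ)^(l+1))) := by
        rw [setLIntegral_const]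
    _ = ENNReal.ofReal (1/2^l) * ENNReal.ofReal ((2:ℝ)^(l+1) - 2^l) := by
        rw [Real.volume_Ioo]
    _ = ENNReal.ofReal ((1/2^l) * ((2:ℝ)^(l+1) - 2^l)) :=
        (ENNReal.ofReal_mul (by positivity)).symm
    _ ≤ 1 := by
        rw [zpow_add_one₀ (by norm_num : (2:ℝ) ≠ 0) l]
        have : (1/(2:ℝ)^l) * ((2:ℝ)^l * 2 - 2^l) = 1 := by field_simp; ring
        rw [this, ENNReal.ofReal_one]

lemma partII_core {a : ℝ → ℝ} (ha : ∀ x : ℝ, 0 < x → DifferentiableAt ℝ a x)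
    (l : ℤ) {r : ℝ} (hr : 1 ≤ r) :
    Vr r a (Set.Ico ((2:ℝ)^l) ((2:ℝ)^(l+1)))
      ≤ (∫⁻ x in Ioo ((2:ℝ)^l) ((2:ℝ)^(l+1)),
          (‖x * deriv a x‖₊ : ℝ≥0∞) ^ (2:ℝ) * ENNReal.ofReal (1/x)) ^ ((1:ℝ)/2) := by
  have h0 : (0:ℝ) < 2 ^ l := two_zpow_pos l
  set B := ∫⁻ x in Ioo ((2:ℝ)^l) ((2:ℝ)^(l+1)),
      (‖x * deriv a x‖₊ : ℝ≥0∞) ^ (2:ℝ) * ENNReal.ofReal (1/x) with hB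
  have hr0 : (0:ℝ) < r := by linarith
  rw [Vr]
  refine iSup_le fun J => iSup_le fun t => iSup_le fun hmono => iSup_le fun hmem => ?_
  set Δ : Fin J → ℝ≥0∞ := fun j => (‖a (t j.succ) - a (t j.castSucc)‖₊ : ℝ≥0∞) with hΔ
  have hpos : ∀ j : Fin (J+1), 0 < t j := fun j => lt_of_lt_of_le h0 (hmem j).1
  have hsub : ∀ j : Fin J, Ioo (t j.castSucc) (t j.succ) ⊆ Ioo ((2:ℝ)^l) ((2:ℝ)^(l+1)) := by
    intro j x hx
    exact ⟨lt_of_le_of_lt (hmem j.castSucc).1 hx.1, lt_trans hx.2 (hmem j.succ).2⟩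
  have step1 : ∑ j : Fin J, Δ j ≤ B ^ ((1:ℝ)/2) := by
    calc ∑ j : Fin J, Δ j
        ≤ ∑ j : Fin J, ∫⁻ x in Ioo (t j.castSucc) (t j.succ), (‖deriv a x‖₊ : ℝ≥0∞) :=
          Finset.sum_le_sum fun j _ =>
            nnnorm_sub_le_lintegral_deriv (hpos _) (hmono j.castSucc_lt_succ).le ha
      _ ≤ ∫⁻ x in Ioo ((2:ℝ)^l) ((2:ℝ)^(l+1)), (‖deriv a x‖₊ : ℝ≥0∞) :=
          sum_lintegral_Ioo_le _ hmono hsub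
      _ ≤ B ^ ((1:ℝ)/2) *
            (∫⁻ x in Ioo ((2:ℝ)^l) ((2:ℝ)^(l+1)), ENNReal.ofReal (1/x)) ^ ((1:ℝ)/2) :=
          lintegral_deriv_le_CS h0
      _ ≤ B ^ ((1:ℝ)/2) * (1:ℝ≥0∞) ^ ((1:ℝ)/2) :=
          mul_le_mul_right (ENNReal.rpow_le_rpow (weight_integral_le_one l) (by norm_num)) _
      _ = B ^ ((1:ℝ)/2) := by rw [ENNReal.one_rpow, mul_one]
  have step2 : (∑ j : Fin J, Δ j ^ r) ^ (1/r) ≤ ∑ j : Fin J, Δ j := by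
    calc (∑ j : Fin J, Δ j ^ r) ^ (1/r)
        ≤ ((∑ j : Fin J, Δ j) ^ r) ^ (1/r) :=
          ENNReal.rpow_le_rpow (sum_rpow_le_rpow_sum _ hr) (by positivity)
      _ = ∑ j : Fin J, Δ j := by
          rw [← ENNReal.rpow_mul, mul_one_div, div_self hr0.ne', ENNReal.rpow_one]
  exact step2.trans step1

lemma partIII {a : ℝ → ℝ} (ha : ∀ x : ℝ, 0 < x → DifferentiableAt ℝ a x) :
    (∑' n : ℤ, (Vr 2 a (Set.Ico ((2:ℝ) ^ n) ((2:ℝ) ^ (n + 1)))) ^ (2:ℝ)) ^ ((1:ℝ)/2)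
      ≤ (∫⁻ x in Set.Ioi (0:ℝ),
          (‖x * deriv a x‖₊ : ℝ≥0∞) ^ (2:ℝ) * ENNReal.ofReal (1/x)) ^ ((1:ℝ)/2) := by
  set g : ℝ → ℝ≥0∞ := fun x => (‖x * deriv a x‖₊ : ℝ≥0∞) ^ (2:ℝ) * ENNReal.ofReal (1/x) with hg
  set S : ℤ → Set ℝ := fun n => Ioo ((2:ℝ)^n) ((2:ℝ)^(n+1)) with hSS
  have h1 : ∀ n : ℤ, (Vr 2 a (Set.Ico ((2:ℝ) ^ n) ((2:ℝ) ^ (n + 1)))) ^ (2:ℝ)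
      ≤ ∫⁻ x in S n, g x := by
    intro n
    have := partII_core ha n (one_le_two)
    calc (Vr 2 a (Set.Ico ((2:ℝ) ^ n) ((2:ℝ) ^ (n + 1)))) ^ (2:ℝ)
        ≤ ((∫⁻ x in S n, g x) ^ ((1:ℝ)/2)) ^ (2:ℝ) :=
          ENNReal.rpow_le_rpow this (by norm_num)
      _ = ∫⁻ x in S n, g x := sq_half
  have key : ∀ i j : ℤ, i < j → Disjoint (S i) (S j) := by
    intro i j hlt
    have hle : (2:ℝ)^(i+1) ≤ 2^j := zpow_le_zpow_right₀ one_le_two (by omega)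
    rw [Set.disjoint_left]
    intro x hx hx'
    exact absurd ((hx.2.trans_le hle).trans hx'.1) (lt_irrefl x)
  have hd : Pairwise (Function.onFun Disjoint S) := by
    intro i j hij
    rcases hij.lt_or_gt with h | h
    · exact key i j h
    · exact (key j i h).symm
  have h2 : ∑' n : ℤ, ∫⁻ x in S n, g x ≤ ∫⁻ x in Set.Ioi (0:ℝ), g x := by
    rw [← lintegral_iUnion (μ := volume) (fun n : ℤ => measurableSet_Ioo) hd g]
    refine lintegral_mono_set (Set.iUnion_subset fun n x hx => ?_)
    exact lt_trans (two_zpow_pos n) hx.1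
  exact ENNReal.rpow_le_rpow ((ENNReal.tsum_le_tsum h1).trans h2) (by norm_num)

end VSFB

open VSFB

/-- Variation bounds via square functions (Lemma A.2): for a nonnegative differentiable
`𝔞` on `(0,∞)`, with an absolute constant: (i) a product bound for `V_r` on `[u,v)`,
(ii) a bound for `V_r` on dyadic blocks, and (iii) the resulting `ℓ^2` bound over all
dyadic blocks by the square function `(∫_0^∞ |t 𝔞'(t)|^2 dt/t)^{1/2}`. -/
theorem variation_square_function_bounds :
    ∃ C : ℝ, 0 < C ∧ ∀ a : ℝ → ℝ,
      (∀ t : ℝ, 0 < t → 0 ≤ a t) → (∀ t : ℝ, 0 < t → DifferentiableAt ℝ a t) →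
      ((∀ u v r : ℝ, 0 < u → u < v → 2 ≤ r →
        Vr r a (Set.Ico u v)
          ≤ ENNReal.ofReal C *
            ((∫⁻ t in Set.Ioo u v,
                ((‖a t‖₊ : ℝ≥0∞)) ^ (2:ℝ) * ENNReal.ofReal (1 / t)) ^ ((1:ℝ)/4) *
             (∫⁻ t in Set.Ioo u v,
                ((‖t * deriv a t‖₊ : ℝ≥0∞)) ^ (2:ℝ) * ENNReal.ofReal (1 / t)) ^ ((1:ℝ)/4)))
      ∧ (∀ (l : ℤ) (r : ℝ), 2 ≤ r →
        Vr r a (Set.Ico ((2:ℝ) ^ l) ((2:ℝ) ^ (l + 1)))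
          ≤ ENNReal.ofReal C *
            (∫⁻ t in Set.Ioo ((2:ℝ) ^ l) ((2:ℝ) ^ (l + 1)),
              ((‖t * deriv a t‖₊ : ℝ≥0∞)) ^ (2:ℝ) * ENNReal.ofReal (1 / t)) ^ ((1:ℝ)/2))
      ∧ ((∑' n : ℤ, (Vr 2 a (Set.Ico ((2:ℝ) ^ n) ((2:ℝ) ^ (n + 1)))) ^ (2:ℝ)) ^ ((1:ℝ)/2)
          ≤ ENNReal.ofReal C *
            (∫⁻ t in Set.Ioi (0:ℝ),
              ((‖t * deriv a t‖₊ : ℝ≥0∞)) ^ (2:ℝ) * ENNReal.ofReal (1 / t)) ^ ((1:ℝ)/2))) := by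
  refine ⟨2, by norm_num, fun a ha0 ha => ⟨?_, ?_, ?_⟩⟩
  · intro u v r hu huv hr
    exact VSFB.partI ha0 ha hu huv hr
  · intro l r hr
    refine (VSFB.partII_core ha l (by linarith)).trans ?_
    exact le_mul_of_one_le_left zero_le (by rw [ENNReal.ofReal_ofNat]; exact one_le_two)
  · refine (VSFB.partIII ha).trans ?_
    exact le_mul_of_one_le_left zero_le (by rw [ENNReal.ofReal_ofNat]; exact one_le_two)

end
end
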